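/- Fix α > 1. If X is an α-evenly distributed finite point set in the closed unit disk in ℝ^2, then L(X) = O(|X|^{3/4}); precisely, there is a constant c depending only on α such that L(X) ≤ c·|X|^{3/4} for all such X with |X| sufficiently large. -/

import Mathlib

open scoped Classical RealInnerProductSpace
open Metric MeasureTheory

set_option maxHeartbeats 2000000

/-- The set of extreme points (convex-layer vertices) of a finite point set. -/
noncomputable def extremePts {d : ℕ} (S : Finset (EuclideanSpace ℝ (Fin d))) :
    Finset (EuclideanSpace ℝ (Fin d)) :=
  S.filter fun x =>
    x ∉ convexHull ℝ ((S.erase x : Finset (EuclideanSpace ℝ (Fin d))) :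
      Set (EuclideanSpace ℝ (Fin d)))

/-- `peel S k` is the set of points remaining after `k` peeling steps, i.e. `X_{k+1}`. -/
noncomputable def peel {d : ℕ} (S : Finset (EuclideanSpace ℝ (Fin d))) :
    ℕ → Finset (EuclideanSpace ℝ (Fin d))
  | 0 => S
  | k + 1 => peel S k \ extremePts (peel S k)

/-- The layer number: the number of peeling steps needed to remove all points. -/
noncomputable def layerNum {d : ℕ} (S : Finset (EuclideanSpace ℝ (Fin d))) : ℕ :=
  sInf {k | peel S k = ∅}

namespace LayerAux

open Real

abbrev E2 := EuclideanSpace ℝ (Fin 2)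

lemma peel_succ {d : ℕ} (S : Finset (EuclideanSpace ℝ (Fin d))) (k : ℕ) :
    peel S (k+1) = peel S k \ extremePts (peel S k) := rfl

lemma peel_succ_subset {d : ℕ} (S : Finset (EuclideanSpace ℝ (Fin d))) (k : ℕ) :
    peel S (k+1) ⊆ peel S k := by
  rw [peel_succ]; exact Finset.sdiff_subset

lemma peel_add_subset {d : ℕ} (S : Finset (EuclideanSpace ℝ (Fin d))) (k j : ℕ) :
    peel S (k + j) ⊆ peel S k := by
  induction j with
  | zero => exact Finset.Subset.refl _
  | succ j ih => exact (peel_succ_subset S (k+j)).trans ih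

lemma peel_le_subset {d : ℕ} (S : Finset (EuclideanSpace ℝ (Fin d))) {k j : ℕ} (h : k ≤ j) :
    peel S j ⊆ peel S k := by
  obtain ⟨i, rfl⟩ := Nat.exists_eq_add_of_le h
  exact peel_add_subset S k i

lemma peel_subset {d : ℕ} (S : Finset (EuclideanSpace ℝ (Fin d))) (k : ℕ) :
    peel S k ⊆ S := by simpa [peel.eq_1] using peel_add_subset S 0 k

lemma max_mem_extremePts {d : ℕ} (S : Finset (EuclideanSpace ℝ (Fin d)))
    (u : EuclideanSpace ℝ (Fin d))
    (hinj : ∀ x ∈ S, ∀ y ∈ S, ⟪x, u⟫ = ⟪y, u⟫ → x = y)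
    (p : EuclideanSpace ℝ (Fin d)) (hp : p ∈ S) (hmax : ∀ y ∈ S, ⟪y, u⟫ ≤ ⟪p, u⟫) :
    p ∈ extremePts S := by
  rw [extremePts, Finset.mem_filter]
  refine ⟨hp, fun hcvx => ?_⟩
  rcases (S.erase p).eq_empty_or_nonempty with he | hne
  · rw [he] at hcvx; simp at hcvx
  · obtain ⟨q, hq, hqmax⟩ := Finset.exists_max_image (S.erase p) (fun y => ⟪y, u⟫) hne
    have hlin : IsLinearMap ℝ (fun y : EuclideanSpace ℝ (Fin d) => ⟪y, u⟫) :=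
      ⟨fun a b => inner_add_left a b u, fun c a => real_inner_smul_left a u c⟩
    have hhalf : Convex ℝ {y : EuclideanSpace ℝ (Fin d) | ⟪y, u⟫ ≤ ⟪q, u⟫} :=
      convex_halfSpace_le hlin _
    have hsub : ((S.erase p : Finset (EuclideanSpace ℝ (Fin d))) :
        Set (EuclideanSpace ℝ (Fin d))) ⊆ {y | ⟪y, u⟫ ≤ ⟪q, u⟫} := by
      intro y hy
      exact hqmax y (by exact_mod_cast hy)
    have := convexHull_min hsub hhalf hcvx
    have hpq : ⟪p, u⟫ = ⟪q, u⟫ :=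
      le_antisymm this (hmax q (Finset.mem_of_mem_erase hq))
    have : p = q := hinj p hp q (Finset.mem_of_mem_erase hq) hpq
    exact (Finset.ne_of_mem_erase hq) this.symm

/-- counting lemma: if x survives K more peels, then K points at least as high (w.r.t. an
injective direction u') existed in `peel X k`. -/
lemma peel_count (X : Finset E2) (u' : E2)
    (hinj : ∀ x ∈ X, ∀ y ∈ X, ⟪x, u'⟫ = ⟪y, u'⟫ → x = y)
    (k K : ℕ) (x : E2) (hx : x ∈ peel X (k + K)) :
    K ≤ ((peel X k).filter (fun y => ⟪x, u'⟫ ≤ ⟪y, u'⟫)).card := by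
  have hxj : ∀ j, j ≤ K → x ∈ peel X (k + j) := fun j hj =>
    peel_le_subset X (by omega) hx
  have hne : ∀ j, j ≤ K → (peel X (k + j)).Nonempty := fun j hj => ⟨x, hxj j hj⟩
  set P : ℕ → E2 := fun j =>
    if h : (peel X (k + j)).Nonempty then
      (Finset.exists_max_image (peel X (k + j)) (fun y => ⟪y, u'⟫) h).choose
    else 0 with hP
  have hPspec : ∀ j, j ≤ K → P j ∈ peel X (k + j) ∧
      ∀ y ∈ peel X (k + j), ⟪y, u'⟫ ≤ ⟪P j, u'⟫ := by
    intro j hj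
    rw [hP]
    simp only [dif_pos (hne j hj)]
    obtain ⟨h1, h2⟩ := (Finset.exists_max_image (peel X (k + j))
      (fun y => ⟪y, u'⟫) (hne j hj)).choose_spec
    exact ⟨h1, h2⟩
  have hPnot : ∀ j, j < K → P j ∉ peel X (k + j + 1) := by
    intro j hj
    obtain ⟨h1, h2⟩ := hPspec j hj.le
    have hext : P j ∈ extremePts (peel X (k + j)) := by
      apply max_mem_extremePts _ u' _ _ h1 h2
      intro a ha b hb
      exact hinj a (peel_subset X _ ha) b (peel_subset X _ hb)
    rw [peel_succ, Finset.mem_sdiff]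
    intro hmem
    exact hmem.2 hext
  have hmaps : ∀ j ∈ Finset.range K,
      P j ∈ (peel X k).filter (fun y => ⟪x, u'⟫ ≤ ⟪y, u'⟫) := by
    intro j hj
    rw [Finset.mem_range] at hj
    obtain ⟨h1, h2⟩ := hPspec j hj.le
    rw [Finset.mem_filter]
    exact ⟨peel_le_subset X (Nat.le_add_right k j) h1, h2 x (hxj j hj.le)⟩
  have hinjP : Set.InjOn P (Finset.range K) := by
    intro a ha b hb hab
    simp only [Finset.coe_range, Set.mem_Iio] at ha hb
    by_contra hne'
    have key : ∀ a b : ℕ, a < K → b < K → a < b → P a = P b → False := by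
      intro a b ha hb hlt hab
      have h1 : P b ∈ peel X (k + a + 1) := by
        have : P b ∈ peel X (k + b) := (hPspec b hb.le).1
        exact peel_le_subset X (by omega) this
      rw [← hab] at h1
      exact hPnot a ha h1
    rcases Nat.lt_or_ge a b with h | h
    · exact key a b ha hb h hab
    · exact key b a hb ha (by omega) hab.symm
  calc K = (Finset.range K).card := (Finset.card_range K).symm
    _ ≤ _ := Finset.card_le_card_of_injOn P hmaps hinjP

noncomputable def rot (x : E2) : E2 := WithLp.toLp 2 ![-(x 1), x 0]
lemma rot_apply0 (x : E2) : rot x 0 = -(x 1) := rfl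
lemma rot_apply1 (x : E2) : rot x 1 = x 0 := rfl
lemma inner_e2 (x y : E2) : ⟪x, y⟫ = x 0 * y 0 + x 1 * y 1 := by
  simp [PiLp.inner_apply, Fin.sum_univ_two]; ring
lemma normsq_e2 (x : E2) : ‖x‖^2 = x 0 ^2 + x 1 ^2 := by
  rw [← real_inner_self_eq_norm_sq, inner_e2]; ring
lemma inner_rot_self (x : E2) : ⟪x, rot x⟫ = 0 := by
  rw [inner_e2, rot_apply0, rot_apply1]; ring
lemma inner_rot_self' (x : E2) : ⟪rot x, x⟫ = 0 := by
  rw [inner_e2, rot_apply0, rot_apply1]; ring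
lemma inner_rot_rot (x y : E2) : ⟪rot x, rot y⟫ = ⟪x, y⟫ := by
  rw [inner_e2, inner_e2, rot_apply0, rot_apply1, rot_apply0, rot_apply1]; ring
lemma norm_rot (x : E2) : ‖rot x‖ = ‖x‖ := by
  have h : ‖rot x‖^2 = ‖x‖^2 := by
    rw [normsq_e2, normsq_e2, rot_apply0, rot_apply1]; ring
  nlinarith [norm_nonneg x, norm_nonneg (rot x)]
lemma normsq_decomp (u : E2) (hu : ‖u‖ = 1) (y : E2) :
    ‖y‖^2 = ⟪y, u⟫^2 + ⟪y, rot u⟫^2 := by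
  have h1 : u 0 ^2 + u 1 ^2 = 1 := by
    have := normsq_e2 u; rw [hu] at this; nlinarith
  rw [normsq_e2, inner_e2, inner_e2, rot_apply0, rot_apply1]
  nlinarith [sq_nonneg (y 0 * u 0 + y 1 * u 1), sq_nonneg (y 0 * u 1 - y 1 * u 0)]

/-- generic perturbation: there is u' near u whose inner products separate points of X -/
lemma exists_generic_dir (X : Finset E2) (u : E2) (hu : ‖u‖ = 1) (ε : ℝ) (hε : 0 < ε) :
    ∃ u' : E2, ‖u' - u‖ < ε ∧ ∀ x ∈ X, ∀ y ∈ X, ⟪x, u'⟫ = ⟪y, u'⟫ → x = y := by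
  set v := rot u with hv
  set bad : Finset ℝ := (X ×ˢ X).image (fun p => -⟪p.1 - p.2, u⟫ / ⟪p.1 - p.2, v⟫) with hbad
  have : (Set.Ioo (0:ℝ) ε).Infinite := Set.Ioo_infinite hε
  obtain ⟨δ, hδmem, hδbad⟩ := (this.diff (bad.finite_toSet)).nonempty
  refine ⟨u + δ • v, ?_, ?_⟩
  · have : ‖(u + δ • v) - u‖ = ‖δ • v‖ := by congr 1; abel
    rw [this, norm_smul, hv, norm_rot, hu]
    simpa [abs_of_pos hδmem.1] using hδmem.2
  · intro x hx y hy hxy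
    by_contra hne
    have hinner : ⟪x - y, u + δ • v⟫ = 0 := by
      rw [inner_sub_left, hxy]; ring
    rw [inner_add_right, real_inner_smul_right] at hinner
    rcases eq_or_ne ⟪x - y, v⟫ 0 with h0 | h0
    · have h1 : ⟪x - y, u⟫ = 0 := by rw [h0] at hinner; linarith
      have h2 : ‖x - y‖^2 = 0 := by rw [normsq_decomp u hu, h1, ← hv, h0]; ring
      have : x - y = 0 := by
        have := pow_eq_zero_iff (n := 2) (by norm_num) |>.mp h2
        exact norm_eq_zero.mp this
      exact hne (sub_eq_zero.mp this)
    · have hδeq : δ = -⟪x - y, u⟫ / ⟪x - y, v⟫ := by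
        rw [eq_div_iff h0]; linarith
      apply hδbad
      rw [hbad]
      simp only [Finset.coe_image, Set.mem_image, Finset.mem_coe, Finset.mem_product]
      exact ⟨(x, y), by simpa using ⟨hx, hy⟩, hδeq.symm⟩

set_option maxHeartbeats 1000000 in
/-- covering the cap by small balls -/
lemma cap_cover (u : E2) (hu : ‖u‖ = 1) (ρ w : ℝ) (hw : 0 < w) (hw1 : w ≤ 1)
    (hρ0 : 0 ≤ ρ) (hρ1 : ρ ≤ 1) (m : ℕ) (hm : 2 / Real.sqrt w < m)
    (y : E2) (hy : ‖y‖ ≤ ρ) (hcap : ρ - 2*w < ⟪y, u⟫) :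
    ∃ i < m, y ∈ closedBall ((ρ - w) • u + (-2*Real.sqrt w + 2*w*(i:ℝ)) • rot u) (3*w) := by
  have hsw : Real.sqrt w > 0 := Real.sqrt_pos.mpr hw
  have hsw2 : Real.sqrt w ^ 2 = w := Real.sq_sqrt hw.le
  set a := ⟪y, u⟫ with ha
  set b := ⟪y, rot u⟫ with hb
  have haρ : a ≤ ρ := by
    have h := abs_real_inner_le_norm y u
    rw [hu, mul_one] at h
    calc a ≤ |⟪y, u⟫| := le_abs_self _
      _ ≤ ‖y‖ := h
      _ ≤ ρ := hy
  have hb2 : b^2 ≤ 4*w := by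
    have hyb : b^2 = ‖y‖^2 - a^2 := by rw [normsq_decomp u hu y]; ring
    have h1 : ‖y‖^2 ≤ ρ^2 := by nlinarith [norm_nonneg y]
    rcases le_or_gt 0 a with h | h
    · nlinarith
    · nlinarith
  have hbu : b ≤ 2*Real.sqrt w := by nlinarith [sq_nonneg (b - 2*Real.sqrt w)]
  have hbl : -(2*Real.sqrt w) ≤ b := by nlinarith [sq_nonneg (b + 2*Real.sqrt w)]
  set i : ℕ := ⌊(b + 2*Real.sqrt w) / (2*w)⌋₊ with hi
  have hden : (0:ℝ) < 2*w := by linarith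
  have him : (i:ℝ) ≤ (b + 2*Real.sqrt w) / (2*w) := Nat.floor_le (div_nonneg (by linarith) hden.le)
  have hilt : (b + 2*Real.sqrt w) / (2*w) < (i:ℝ) + 1 := Nat.lt_floor_add_one _
  have hfrac : (b + 2*Real.sqrt w) / (2*w) ≤ 2 / Real.sqrt w := by
    rw [div_le_div_iff₀ hden hsw]
    nlinarith
  refine ⟨i, ?_, ?_⟩
  · exact_mod_cast lt_of_le_of_lt (him.trans hfrac) hm
  · set t : ℝ := -2*Real.sqrt w + 2*w*(i:ℝ) with ht
    have htb1 : t ≤ b := by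
      have h2 : 2*w*(i:ℝ) ≤ b + 2*Real.sqrt w := by
        have := mul_le_mul_of_nonneg_left him hden.le
        rwa [mul_div_cancel₀ _ (ne_of_gt hden)] at this
      linarith
    have htb2 : b - t < 2*w := by
      have h2 : b + 2*Real.sqrt w < 2*w*((i:ℝ)+1) := by
        have := mul_lt_mul_of_pos_left hilt hden
        rwa [mul_div_cancel₀ _ (ne_of_gt hden)] at this
      rw [ht]; linarith [h2]
    set z : E2 := (ρ - w) • u + t • rot u with hz
    have hzu : ⟪z, u⟫ = ρ - w := by
      rw [hz, inner_add_left, real_inner_smul_left, real_inner_smul_left,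
        real_inner_self_eq_norm_sq, hu, inner_rot_self']
      ring
    have hzv : ⟪z, rot u⟫ = t := by
      rw [hz, inner_add_left, real_inner_smul_left, real_inner_smul_left,
        inner_rot_self, inner_rot_rot, real_inner_self_eq_norm_sq, hu]
      ring
    have hyz : ‖y - z‖^2 = (a - (ρ - w))^2 + (b - t)^2 := by
      rw [normsq_decomp u hu (y - z), inner_sub_left, inner_sub_left, hzu, hzv, ← ha, ← hb]
    have h9 : ‖y - z‖^2 ≤ (3*w)^2 := by
      rw [hyz]; nlinarith
    have hfin : ‖y - z‖ ≤ 3*w := by nlinarith [norm_nonneg (y - z)]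
    rw [mem_closedBall, dist_eq_norm]
    exact hfin

/-- cap cardinality bound from per-ball bounds -/
lemma cap_card_le (X : Finset E2) (u : E2) (hu : ‖u‖ = 1) (ρ w : ℝ)
    (hw : 0 < w) (hw1 : w ≤ 1) (hρ0 : 0 ≤ ρ) (hρ1 : ρ ≤ 1) (m B : ℕ)
    (hm : 2 / Real.sqrt w < m)
    (hB : ∀ z : E2, (X.filter fun y => y ∈ closedBall z (3*w)).card ≤ B) :
    (X.filter fun y => ‖y‖ ≤ ρ ∧ ρ - 2*w < ⟪y, u⟫).card ≤ m * B := by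
  set f : ℕ → Finset E2 := fun i =>
    X.filter (fun y => y ∈ closedBall ((ρ - w) • u + (-2*Real.sqrt w + 2*w*(i:ℝ)) • rot u) (3*w))
    with hf
  have hsub : (X.filter fun y => ‖y‖ ≤ ρ ∧ ρ - 2*w < ⟪y, u⟫) ⊆
      (Finset.range m).biUnion f := by
    intro y hy
    rw [Finset.mem_filter] at hy
    obtain ⟨hy1, hy2, hy3⟩ := hy
    obtain ⟨i, him, hball⟩ := cap_cover u hu ρ w hw hw1 hρ0 hρ1 m hm y hy2 hy3
    rw [Finset.mem_biUnion]
    exact ⟨i, Finset.mem_range.mpr him, Finset.mem_filter.mpr ⟨hy1, hball⟩⟩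
  calc (X.filter fun y => ‖y‖ ≤ ρ ∧ ρ - 2*w < ⟪y, u⟫).card
      ≤ ((Finset.range m).biUnion f).card := Finset.card_le_card hsub
    _ ≤ ∑ i ∈ Finset.range m, (f i).card := Finset.card_biUnion_le
    _ ≤ ∑ _i ∈ Finset.range m, B := Finset.sum_le_sum (fun i _ => hB _)
    _ = m * B := by rw [Finset.sum_const, Finset.card_range, smul_eq_mul]

/-- key phase lemma: m*B+1 peels shrink the enclosing radius by w -/
lemma phase (X : Finset E2) (hXb : ∀ x ∈ X, ‖x‖ ≤ 1)
    (w : ℝ) (hw : 0 < w) (hw1 : w ≤ 1) (m B : ℕ) (hm : 2 / Real.sqrt w < m)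
    (hB : ∀ z : E2, (X.filter fun y => y ∈ closedBall z (3*w)).card ≤ B)
    (ρ : ℝ) (hρ0 : 0 ≤ ρ) (hρ1 : ρ ≤ 1) (k : ℕ)
    (hk : ∀ y ∈ peel X k, ‖y‖ ≤ ρ) :
    ∀ x ∈ peel X (k + (m*B+1)), ‖x‖ ≤ max (ρ - w) 0 := by
  intro x hx
  by_contra hcon
  push_neg at hcon
  have hx0 : x ≠ 0 := by
    intro h
    rw [h, norm_zero] at hcon
    exact absurd (le_max_right (ρ - w) 0) (not_le.mpr hcon)
  have hxρw : ρ - w < ‖x‖ := lt_of_le_of_lt (le_max_left _ _) hcon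
  have hxX : x ∈ X := peel_subset X _ hx
  have hx1 : ‖x‖ ≤ 1 := hXb x hxX
  set u : E2 := ‖x‖⁻¹ • x with hudef
  have hu : ‖u‖ = 1 := norm_smul_inv_norm hx0
  have hxu : ⟪x, u⟫ = ‖x‖ := by
    rw [hudef, real_inner_smul_right, real_inner_self_eq_norm_sq, sq]
    rw [inv_mul_eq_div]
    exact mul_div_cancel_right₀ _ (norm_ne_zero_iff.mpr hx0)
  obtain ⟨u', hu'near, hu'inj⟩ := exists_generic_dir X u hu (w/2) (by linarith)
  have hcount := peel_count X u' hu'inj k (m*B+1) x hx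
  have hsub : (peel X k).filter (fun y => ⟪x, u'⟫ ≤ ⟪y, u'⟫) ⊆
      X.filter (fun y => ‖y‖ ≤ ρ ∧ ρ - 2*w < ⟪y, u⟫) := by
    intro y hy
    rw [Finset.mem_filter] at hy ⊢
    obtain ⟨hy1, hy2⟩ := hy
    have hyX : y ∈ X := peel_subset X k hy1
    have hy1' : ‖y‖ ≤ 1 := hXb y hyX
    refine ⟨hyX, hk y hy1, ?_⟩
    have hd1 : |⟪y, u' - u⟫| ≤ ‖y‖ * ‖u' - u‖ := abs_real_inner_le_norm y (u' - u)
    have hd2 : |⟪x, u' - u⟫| ≤ ‖x‖ * ‖u' - u‖ := abs_real_inner_le_norm x (u' - u)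
    have hnn : 0 ≤ ‖u' - u‖ := norm_nonneg _
    have hb1 : |⟪y, u' - u⟫| ≤ w/2 := by
      calc |⟪y, u' - u⟫| ≤ ‖y‖ * ‖u' - u‖ := hd1
        _ ≤ 1 * (w/2) := by
            apply mul_le_mul hy1' hu'near.le hnn zero_le_one
        _ = w/2 := one_mul _
    have hb2 : |⟪x, u' - u⟫| ≤ w/2 := by
      calc |⟪x, u' - u⟫| ≤ ‖x‖ * ‖u' - u‖ := hd2
        _ ≤ 1 * (w/2) := by
            apply mul_le_mul hx1 hu'near.le hnn zero_le_one
        _ = w/2 := one_mul _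
    have e1 : ⟪y, u' - u⟫ = ⟪y, u'⟫ - ⟪y, u⟫ := inner_sub_right y u' u
    have e2 : ⟪x, u' - u⟫ = ⟪x, u'⟫ - ⟪x, u⟫ := inner_sub_right x u' u
    have a1 := abs_le.mp hb1
    have a2 := abs_le.mp hb2
    -- ⟪y,u⟫ ≥ ⟪y,u'⟫ - w/2 ≥ ⟪x,u'⟫ - w/2 ≥ ⟪x,u⟫ - w = ‖x‖ - w > ρ - 2w
    rw [e1] at a1
    rw [e2] at a2
    have : ‖x‖ - w ≤ ⟪y, u⟫ := by rw [← hxu]; linarith [a1.1, a1.2, a2.1, a2.2, hy2]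
    linarith
  have h1 : m*B+1 ≤ (X.filter (fun y => ‖y‖ ≤ ρ ∧ ρ - 2*w < ⟪y, u⟫)).card :=
    hcount.trans (Finset.card_le_card hsub)
  have h2 := cap_card_le X u hu ρ w hw hw1 hρ0 hρ1 m B hm hB
  omega

lemma extremePts_singleton (a : E2) : extremePts {a} = {a} := by
  rw [extremePts]
  apply Finset.filter_true_of_mem
  intro x hx
  rw [Finset.mem_singleton] at hx
  subst hx
  rw [Finset.erase_singleton]
  simp

lemma peel_empty_succ (X : Finset E2) (M : ℕ) (h : peel X M = ∅) : peel X (M+1) = ∅ := by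
  rw [peel_succ, h]
  simp

lemma vol_closedBall_e2 (z : E2) (r : ℝ) (hr : 0 ≤ r) :
    (volume (closedBall z r)).toReal = π * r^2 := by
  rw [EuclideanSpace.volume_closedBall]
  have hc : (Fintype.card (Fin 2)) = 2 := by simp
  rw [hc]
  have h2 : Real.Gamma ((2:ℕ) / 2 + 1) = 1 := by
    norm_num [Real.Gamma_two]
  rw [h2]
  have h3 : Real.sqrt π ^ 2 = π := Real.sq_sqrt pi_pos.le
  rw [h3]
  rw [ENNReal.toReal_mul, ENNReal.toReal_pow, ENNReal.toReal_ofReal hr,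
    ENNReal.toReal_ofReal (by positivity)]
  ring

end LayerAux

theorem layerNum_evenly_distributed_plane (α : ℝ) (hα : 1 < α) :
    ∃ c : ℝ, 0 < c ∧ ∃ N : ℕ, ∀ X : Finset (EuclideanSpace ℝ (Fin 2)),
      (∀ x ∈ X, x ∈ closedBall (0 : EuclideanSpace ℝ (Fin 2)) 1) →
      (∀ (z : EuclideanSpace ℝ (Fin 2)) (r : ℝ), 0 < r →
        ((X.filter fun x => x ∈ closedBall z r).card : ℤ)
          ≤ ⌈α * X.card * (volume (closedBall z r)).toReal⌉) →
      N ≤ X.card →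
      (layerNum X : ℝ) ≤ c * (X.card : ℝ) ^ ((3 : ℝ) / 4) := by
  classical
  refine ⟨243 * α, by linarith, 1, ?_⟩
  intro X hXball hXcount hN
  obtain ⟨n, hn⟩ : ∃ n : ℕ, n = X.card := ⟨_, rfl⟩
  rw [← hn] at hXcount hN ⊢
  have hn1 : (1:ℝ) ≤ (n:ℝ) := by exact_mod_cast hN
  have hn0 : (0:ℝ) < (n:ℝ) := by linarith
  obtain ⟨s, hs⟩ : ∃ s : ℝ, s = Real.sqrt n := ⟨_, rfl⟩
  have hs1 : 1 ≤ s := by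
    rw [hs, show (1:ℝ) = Real.sqrt 1 by simp]
    exact Real.sqrt_le_sqrt hn1
  have hs0 : 0 < s := by linarith
  have hs2 : s^2 = n := by rw [hs]; exact Real.sq_sqrt hn0.le
  obtain ⟨w, hwdef⟩ : ∃ w : ℝ, w = s⁻¹ := ⟨_, rfl⟩
  have hw : 0 < w := by rw [hwdef]; positivity
  have hw1 : w ≤ 1 := by
    rw [hwdef]
    exact inv_le_one_of_one_le₀ hs1
  have hws : s * w = 1 := by
    rw [hwdef]
    field_simp
  have hw2 : (n:ℝ) * w^2 = 1 := by
    rw [← hs2]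
    nlinarith
  obtain ⟨q, hq⟩ : ∃ q : ℝ, q = Real.sqrt s := ⟨_, rfl⟩
  have hq1 : 1 ≤ q := by
    rw [hq, show (1:ℝ) = Real.sqrt 1 by simp]
    exact Real.sqrt_le_sqrt hs1
  have hq0 : 0 < q := by linarith
  have hq2 : q^2 = s := by rw [hq]; exact Real.sq_sqrt hs0.le
  have hsqw : Real.sqrt w = q⁻¹ := by
    rw [hwdef, hq, Real.sqrt_inv]
  obtain ⟨m, hm⟩ : ∃ m : ℕ, m = ⌈2*q⌉₊ + 1 := ⟨_, rfl⟩
  have hmgt : 2 / Real.sqrt w < m := by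
    rw [hsqw, div_eq_mul_inv, inv_inv]
    have h1 : 2*q ≤ ((⌈2*q⌉₊ : ℕ) : ℝ) := Nat.le_ceil (2*q)
    have h2 : ((⌈2*q⌉₊ : ℕ) : ℝ) < (m:ℝ) := by
      rw [hm]; push_cast; linarith
    linarith
  obtain ⟨B, hB⟩ : ∃ B : ℕ, B = (⌈9 * Real.pi * α⌉).toNat := ⟨_, rfl⟩
  have hBceil : (0:ℤ) ≤ ⌈9 * Real.pi * α⌉ := Int.ceil_nonneg (by positivity)
  have hBval : ∀ z : EuclideanSpace ℝ (Fin 2),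
      (X.filter fun y => y ∈ closedBall z (3*w)).card ≤ B := by
    intro z
    have h3w : 0 < 3*w := by linarith
    have hc := hXcount z (3*w) h3w
    rw [LayerAux.vol_closedBall_e2 z (3*w) h3w.le] at hc
    have heq : α * (n:ℝ) * (Real.pi * (3*w)^2) = 9 * Real.pi * α := by
      have h4 : α * (n:ℝ) * (Real.pi * (3*w)^2) = 9 * Real.pi * α * ((n:ℝ) * w^2) := by ring
      rw [h4, hw2, mul_one]
    rw [heq] at hc
    rw [hB]
    have := (Int.le_toNat hBceil).mpr hc
    exact_mod_cast this
  obtain ⟨K, hK⟩ : ∃ K : ℕ, K = m * B + 1 := ⟨_, rfl⟩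
  have hXb' : ∀ x ∈ X, ‖x‖ ≤ 1 := by
    intro x hx
    have := hXball x hx
    rwa [mem_closedBall, dist_zero_right] at this
  have main : ∀ t : ℕ, ∀ x ∈ peel X (t * K), ‖x‖ ≤ max (1 - t * w) 0 := by
    intro t
    induction t with
    | zero =>
      intro x hx
      rw [Nat.zero_mul] at hx
      simp only [Nat.cast_zero, zero_mul, sub_zero]
      rw [max_eq_left zero_le_one]
      exact hXb' x (LayerAux.peel_subset X 0 hx)
    | succ t ih =>
      have hρ0 : 0 ≤ max (1 - (t:ℝ) * w) 0 := le_max_right _ _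
      have hρ1 : max (1 - (t:ℝ) * w) 0 ≤ 1 := by
        apply max_le _ zero_le_one
        have h5 : 0 ≤ (t:ℝ) * w := by positivity
        linarith
      have hstep := LayerAux.phase X hXb' w hw hw1 m B hmgt hBval
        (max (1 - (t:ℝ) * w) 0) hρ0 hρ1 (t * K) ih
      intro x hx
      have hx' : x ∈ peel X (t * K + K) := by
        have h6 : (t+1) * K = t * K + K := by ring
        rwa [h6] at hx
      rw [← hK] at hstep
      have h7 := hstep x hx'
      apply h7.trans
      apply max_le _ (le_max_right _ _)
      rcases le_or_gt 0 (1 - (t:ℝ) * w) with h | h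
      · rw [max_eq_left h]
        apply le_max_of_le_left
        push_cast
        linarith
      · rw [max_eq_right h.le]
        have h8 : 0 - w ≤ 0 := by linarith
        apply le_trans h8 (le_max_right _ _)
  obtain ⟨T, hT⟩ : ∃ T : ℕ, T = ⌈s⌉₊ := ⟨_, rfl⟩
  have hTs : s ≤ (T:ℝ) := by rw [hT]; exact Nat.le_ceil s
  have hfinal : peel X (T * K) ⊆ {0} := by
    intro x hx
    have h9 := main T x hx
    have hT0 : 1 - (T:ℝ) * w ≤ 0 := by nlinarith
    rw [max_eq_right hT0] at h9
    have h10 : ‖x‖ = 0 := le_antisymm h9 (norm_nonneg x)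
    rw [Finset.mem_singleton]
    exact norm_eq_zero.mp h10
  have hempty : peel X (T * K + 1) = ∅ := by
    rcases Finset.subset_singleton_iff.mp hfinal with h | h
    · exact LayerAux.peel_empty_succ X _ h
    · rw [LayerAux.peel_succ, h, LayerAux.extremePts_singleton]
      simp
  have hlayer : layerNum X ≤ T * K + 1 := Nat.sInf_le hempty
  have hcast : (layerNum X : ℝ) ≤ (T:ℝ) * (K:ℝ) + 1 := by
    have h11 : ((layerNum X : ℕ) : ℝ) ≤ ((T * K + 1 : ℕ) : ℝ) := by exact_mod_cast hlayer
    push_cast at h11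
    linarith
  have hmR : (m:ℝ) ≤ 4 * q := by
    rw [hm]
    push_cast
    have h1 : (⌈2*q⌉₊ : ℝ) < 2*q + 1 := Nat.ceil_lt_add_one (by positivity)
    linarith
  have hBR : (B:ℝ) ≤ 30 * α := by
    have h1 : ((⌈9 * Real.pi * α⌉ : ℤ) : ℝ) < 9 * Real.pi * α + 1 := Int.ceil_lt_add_one _
    have h2 : ((B:ℕ):ℤ) = ⌈9 * Real.pi * α⌉ := by rw [hB]; exact Int.toNat_of_nonneg hBceil
    have h3 : (B:ℝ) = ((⌈9 * Real.pi * α⌉ : ℤ) : ℝ) := by exact_mod_cast h2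
    have hpi : Real.pi < 3.15 := Real.pi_lt_d2
    nlinarith
  have hKR : (K:ℝ) ≤ 121 * α * q := by
    rw [hK]
    push_cast
    have hmB : (m:ℝ) * (B:ℝ) ≤ (4*q) * (30*α) := by
      apply mul_le_mul hmR hBR (by positivity) (by positivity)
    have h1aq : 1 ≤ α * q := by nlinarith
    nlinarith
  have hTR : (T:ℝ) ≤ 2 * s := by
    have h1 : (T:ℝ) < s + 1 := by
      rw [hT]; exact Nat.ceil_lt_add_one hs0.le
    linarith
  have hrpow : ((n:ℝ)) ^ ((3:ℝ)/4) = s * q := by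
    have e1 : (n:ℝ) = q^4 := by
      rw [← hs2, ← hq2]; ring
    rw [e1]
    rw [show ((3:ℝ)/4) = 3 * (4:ℝ)⁻¹ by norm_num]
    have e2 : ((q^4 : ℝ)) ^ ((3:ℝ) * (4:ℝ)⁻¹) = q^3 := by
      rw [← Real.rpow_natCast q 4, ← Real.rpow_mul hq0.le, ← Real.rpow_natCast q 3]
      norm_num
    rw [e2, ← hq2]
    ring
  calc (layerNum X : ℝ) ≤ (T:ℝ) * (K:ℝ) + 1 := hcast
    _ ≤ (2*s) * (121 * α * q) + 1 := by
        have h12 := mul_le_mul hTR hKR (by positivity) (by positivity)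
        linarith
    _ ≤ 243 * α * (s * q) := by
        have e3 : (2*s) * (121 * α * q) = 242 * (α * (s * q)) := by ring
        have e4 : 1 ≤ α * (s * q) := by nlinarith
        nlinarith
    _ = 243 * α * (n:ℝ) ^ ((3:ℝ)/4) := by rw [hrpow]
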